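/- If G and H are word-representable graphs with representation numbers k₁ and k₂ respectively, then G □ H has a uniform word-representant in which each letter occurs exactly k₁ + k₂ + min{|V(G)|, |V(H)|} times; in particular G □ H is (k₁ + k₂ + min{|V(G)|,|V(H)|})-word-representable. -/

import Mathlib

set_option linter.unusedSectionVars false
set_option linter.unusedVariables false
set_option maxHeartbeats 1000000

open SimpleGraph

variable {V : Type*}

/-- Two distinct letters `x` and `y` alternate in a word `w` if the subsequence of `w`
consisting of all occurrences of `x` and `y` is strictly alternating. -/
def Alternates [DecidableEq V] (x y : V) (w : List V) : Prop :=
  (w.filter (fun z => decide (z = x ∨ z = y))).Chain' (· ≠ ·)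

/-- A word `w` represents the graph `G` if it contains every vertex at least once and
two distinct vertices are adjacent iff they alternate in `w`. -/
def Represents [DecidableEq V] (G : SimpleGraph V) (w : List V) : Prop :=
  (∀ v : V, v ∈ w) ∧ ∀ x y : V, x ≠ y → (G.Adj x y ↔ Alternates x y w)

/-- A graph is word-representable if some word represents it. -/
def WordRepresentable [DecidableEq V] (G : SimpleGraph V) : Prop :=
  ∃ w : List V, Represents G w

/-- `l(G)`: the minimum length of a word-representant of `G`. -/
noncomputable def reprLen [DecidableEq V] (G : SimpleGraph V) : ℕ :=
  sInf {n | ∃ w : List V, Represents G w ∧ w.length = n}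

theorem List.chain'_cons' {α : Type*} {R : α → α → Prop} {x : α} {l : List α} :
    List.Chain' R (x :: l) ↔ (∀ y ∈ l.head?, R x y) ∧ List.Chain' R l := List.isChain_cons

theorem List.chain'_cons {α : Type*} {R : α → α → Prop} {x y : α} {l : List α} :
    List.Chain' R (x :: y :: l) ↔ R x y ∧ List.Chain' R (y :: l) := List.isChain_cons_cons

theorem List.chain'_append {α : Type*} {R : α → α → Prop} {l₁ l₂ : List α} :
    List.Chain' R (l₁ ++ l₂) ↔ List.Chain' R l₁ ∧ List.Chain' R l₂ ∧
      ∀ x ∈ l₁.getLast?, ∀ y ∈ l₂.head?, R x y := List.isChain_append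

theorem List.chain'_map {α β : Type*} {R : α → α → Prop} (f : β → α) {l : List β} :
    List.Chain' R (List.map f l) ↔ List.Chain' (fun a b : β => R (f a) (f b)) l :=
  List.isChain_map f

@[simp] theorem List.chain'_nil {α : Type*} {R : α → α → Prop} : List.Chain' R [] :=
  List.IsChain.nil

@[simp] theorem List.chain'_singleton {α : Type*} {R : α → α → Prop} (a : α) :
    List.Chain' R [a] := List.IsChain.singleton a

namespace WR16



open List

/-- alternating boolean word of length `n` starting with `b` -/
def altb : Bool → ℕ → List Bool
  | _, 0 => []
  | b, n+1 => b :: altb (!b) n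

@[simp] lemma altb_zero (b : Bool) : altb b 0 = [] := rfl
@[simp] lemma altb_succ (b : Bool) (n : ℕ) : altb b (n+1) = b :: altb (!b) n := rfl

lemma altb_head? {n : ℕ} (b : Bool) (h : n ≠ 0) : (altb b n).head? = some b := by
  cases n with
  | zero => exact absurd rfl h
  | succ m => rfl

lemma chain'_altb (b : Bool) (n : ℕ) : (altb b n).Chain' (· ≠ ·) := by
  induction n generalizing b with
  | zero => simp
  | succ n ih =>
    rw [altb_succ, List.chain'_cons']
    refine ⟨?_, ih (!b)⟩
    intro y hy
    cases n with
    | zero => simp [altb] at hy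
    | succ m =>
      rw [altb_head? (!b) (by omega)] at hy
      cases hy
      cases b <;> simp

lemma altb_append (n : ℕ) : ∀ (b : Bool) (m : ℕ),
    altb b (n + m) = altb b n ++ altb (if n % 2 = 0 then b else !b) m := by
  induction n with
  | zero => intro b m; simp
  | succ n ih =>
    intro b m
    rw [show n + 1 + m = (n + m) + 1 by omega, altb_succ, altb_succ, ih (!b) m]
    by_cases h : n % 2 = 0
    · have h1 : ¬ ((n+1) % 2 = 0) := by omega
      simp [h, h1]
    · have h1 : (n+1) % 2 = 0 := by omega
      simp [h, h1]

lemma altb_count (n : ℕ) : ∀ b : Bool,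
    (altb b n).count b = (n+1)/2 ∧ (altb b n).count (!b) = n/2 := by
  induction n with
  | zero => intro b; simp
  | succ n ih =>
    intro b
    obtain ⟨h1, h2⟩ := ih (!b)
    rw [Bool.not_not] at h2
    constructor
    · rw [altb_succ, List.count_cons_self, h2]; omega
    · rw [altb_succ, List.count_cons_of_ne (by cases b <;> simp), h1]

lemma eq_altb_of_chain' : ∀ {l : List Bool}, l.Chain' (· ≠ ·) →
    l = altb (l.headD true) l.length := by
  intro l
  induction l with
  | nil => intro _; rfl
  | cons b l ih =>
    intro h
    rw [List.chain'_cons'] at h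
    have hl := ih h.2
    cases l with
    | nil => rfl
    | cons c l' =>
      have hbc : b ≠ c := h.1 c rfl
      have hc : c = !b := by
        clear ih hl h
        cases b <;> cases c <;> simp_all
      simp only [List.headD_cons] at hl
      rw [List.length_cons, altb_succ, List.headD_cons, ← hc, ← hl]

lemma eq_altb_true {l : List Bool} (h : l.Chain' (· ≠ ·)) (hh : l.head? = some true)
    (hc : l.count true = l.count false) : l = altb true (2 * l.count true) := by
  have hd : l.headD true = true := by
    cases l with
    | nil => simp at hh
    | cons c t => simp only [List.head?_cons, Option.some.injEq] at hh; simp [hh]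
  have h1 := eq_altb_of_chain' h
  rw [hd] at h1
  have c1 := (altb_count l.length true).1
  have c2 := (altb_count l.length true).2
  rw [← h1] at c1 c2
  simp only [Bool.not_true] at c2
  have hlen : l.length = 2 * l.count true := by omega
  rw [← hlen]; exact h1

lemma altb_getLast?_even {k : ℕ} (b : Bool) (hk : k ≠ 0) :
    (altb b (2*k)).getLast? = some (!b) := by
  rw [show 2*k = (2*k-1) + 1 by omega, altb_append]
  have h : ¬ ((2*k-1) % 2 = 0) := by omega
  rw [if_neg h]
  have : altb (!b) 1 = [!b] := rfl
  rw [this, List.getLast?_concat]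

lemma altb_append_even (b : Bool) (j m : ℕ) :
    altb b (2*j + m) = altb b (2*j) ++ altb b m := by
  rw [altb_append]; simp [Nat.mul_mod_right]

lemma altb_append_odd3 (b : Bool) (m : ℕ) :
    altb b (3 + m) = altb b 3 ++ altb (!b) m := by
  rw [altb_append]; norm_num

lemma altb_true_two : altb true 2 = [true, false] := rfl
lemma altb_true_three : altb true 3 = [true, false, true] := rfl
lemma altb_false_three : altb false 3 = [false, true, false] := rfl
lemma altb_true_one : altb true 1 = [true] := rfl

/-- `IsTF l` : `l` is a (possibly empty) alternating list `[true,false,true,false,...]`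
of even length. -/
def IsTF (l : List Bool) : Prop := ∃ k, l = altb true (2*k)

lemma IsTF_nil : IsTF [] := ⟨0, rfl⟩

lemma IsTF_tf : IsTF [true, false] := ⟨1, rfl⟩

lemma IsTF.append {A B : List Bool} (hA : IsTF A) (hB : IsTF B) : IsTF (A ++ B) := by
  obtain ⟨j, rfl⟩ := hA
  obtain ⟨k, rfl⟩ := hB
  exact ⟨j + k, by rw [show 2*(j+k) = 2*j + 2*k by ring, altb_append_even]⟩

lemma IsTF.flatMap {l : List α} {f : α → List Bool} (h : ∀ s ∈ l, IsTF (f s)) :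
    IsTF (l.flatMap f) := by
  induction l with
  | nil => exact IsTF_nil
  | cons a l ih =>
    rw [List.flatMap_cons]
    exact (h a (by simp)).append (ih (fun s hs => h s (by simp [hs])))

lemma IsTF.chain' {l : List Bool} (h : IsTF l) : l.Chain' (· ≠ ·) := by
  obtain ⟨k, rfl⟩ := h; exact chain'_altb _ _

lemma flatten_replicate_pair (b : Bool) (k : ℕ) :
    (List.replicate k [b, !b]).flatten = altb b (2*k) := by
  induction k with
  | zero => simp
  | succ k ih =>
    rw [List.replicate_succ, List.flatten_cons, show 2*(k+1) = 2 + 2*k by ring,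
      altb_append_even b 1 (2*k), ih]
    rfl









variable {α : Type*} {β : Type*} {γ : Type*} [DecidableEq α] [DecidableEq β]

/-- the subsequence of occurrences of `x` (as `true`) and `y` (as `false`) in `l` -/
def patF (x y : α) (l : List α) : List Bool :=
  l.filterMap fun z => if z = x then some true else if z = y then some false else none

@[simp] lemma patF_nil (x y : α) : patF x y [] = [] := rfl

lemma patF_cons (x y z : α) (l : List α) :
    patF x y (z :: l) = (if z = x then [true] else if z = y then [false] else []) ++ patF x y l := by
  unfold patF
  rw [List.filterMap_cons]
  by_cases hx : z = x
  · rw [if_pos hx, if_pos hx]; rfl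
  · rw [if_neg hx, if_neg hx]
    by_cases hy : z = y
    · rw [if_pos hy, if_pos hy]; rfl
    · rw [if_neg hy, if_neg hy]; rfl

lemma patF_append (x y : α) (l₁ l₂ : List α) :
    patF x y (l₁ ++ l₂) = patF x y l₁ ++ patF x y l₂ :=
  List.filterMap_append

lemma patF_flatMap (x y : β) (l : List α) (f : α → List β) :
    patF x y (l.flatMap f) = l.flatMap fun z => patF x y (f z) := by
  induction l with
  | nil => rfl
  | cons a l ih => rw [List.flatMap_cons, List.flatMap_cons, patF_append, ih]

lemma patF_eq_nil {x y : α} {l : List α} (h : ∀ c ∈ l, c ≠ x ∧ c ≠ y) :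
    patF x y l = [] := by
  apply List.filterMap_eq_nil_iff.mpr
  intro c hc
  simp [(h c hc).1, (h c hc).2]

lemma count_true_patF {x y : α} (hxy : x ≠ y) (w : List α) :
    (patF x y w).count true = w.count x := by
  induction w with
  | nil => rfl
  | cons z w ih =>
    rw [patF_cons, List.count_append, ih]
    by_cases hx : z = x
    · subst hx; simp only [if_pos rfl]
      simp [List.count_cons_self]; omega
    · by_cases hy : z = y
      · subst hy; simp [hx, List.count_cons_of_ne (Ne.symm hx)]
      · simp [hx, hy, List.count_cons_of_ne (fun h => hx h.symm)]

lemma count_false_patF {x y : α} (hxy : x ≠ y) (w : List α) :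
    (patF x y w).count false = w.count y := by
  induction w with
  | nil => rfl
  | cons z w ih =>
    rw [patF_cons, List.count_append, ih]
    by_cases hx : z = x
    · subst hx; simp [List.count_cons_of_ne (Ne.symm hxy), hxy]
    · by_cases hy : z = y
      · subst hy; simp [hx, List.count_cons_self]; omega
      · simp [hx, hy, List.count_cons_of_ne (fun h => hy h.symm)]

lemma head?_patF {x y : α} : ∀ {w : List α}, x ∈ w →
    List.idxOf x w < List.idxOf y w → (patF x y w).head? = some true := by
  intro w
  induction w with
  | nil => intro h; cases h
  | cons z w ih =>
    intro hx hlt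
    by_cases hzx : z = x
    · subst hzx; simp [patF_cons]
    · by_cases hzy : z = y
      · have h0 : List.idxOf y (z :: w) = 0 := by rw [hzy]; exact List.idxOf_cons_self
        omega
      · have hx' : x ∈ w := by
          cases hx with
          | head => exact absurd rfl hzx
          | tail _ h => exact h
        have hlt' : List.idxOf x w < List.idxOf y w := by
          rw [List.idxOf_cons_ne (a := x) w hzx,
            List.idxOf_cons_ne (a := y) w hzy] at hlt
          omega
        rw [patF_cons, if_neg hzx, if_neg hzy, List.nil_append]
        exact ih hx' hlt'

/-- classification of the pattern of an "alternating" adjacent pair of uniform multiplicity -/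
lemma patF_eq_altb {x y : α} {w : List α} {k : ℕ} (hxy : x ≠ y) (hx : x ∈ w)
    (hlt : List.idxOf x w < List.idxOf y w)
    (hch : (patF x y w).Chain' (· ≠ ·)) (hcx : w.count x = k) (hcy : w.count y = k) :
    patF x y w = altb true (2 * k) := by
  have h1 := eq_altb_true hch (head?_patF hx hlt)
    (by rw [count_true_patF hxy, count_false_patF hxy, hcx, hcy])
  rw [count_true_patF hxy, hcx] at h1
  exact h1

lemma patF_eq_map {x y : α} (hxy : x ≠ y) (w : List α) :
    patF x y w = (w.filter fun z => decide (z = x ∨ z = y)).map fun z => decide (z = x) := by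
  induction w with
  | nil => rfl
  | cons z w ih =>
    rw [patF_cons, List.filter_cons]
    by_cases hx : z = x
    · rw [if_pos hx, if_pos (by simp [hx]), List.map_cons, ih]
      simp [hx]
    · by_cases hy : z = y
      · rw [if_neg hx, if_pos hy, if_pos (by simp [hy]), List.map_cons, ih]
        simp [hx]
      · rw [if_neg hx, if_neg hy, if_neg (by simp [hx, hy]), ih]
        rfl

lemma chain'_map_decide {x y : α} (hxy : x ≠ y) :
    ∀ {l : List α}, (∀ z ∈ l, z = x ∨ z = y) →
      (l.Chain' (· ≠ ·) ↔ (l.map fun z => decide (z = x)).Chain' (· ≠ ·)) := by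
  intro l
  induction l with
  | nil => simp
  | cons a l ih =>
    intro hm
    cases l with
    | nil => simp
    | cons b t =>
      have hab : a ≠ b ↔ (decide (a = x) ≠ decide (b = x)) := by
        rcases hm a (by simp) with ha | ha <;> rcases hm b (by simp) with hb | hb <;>
          subst ha <;> subst hb <;> simp [hxy, Ne.symm hxy]
      have ih' := ih (fun z hz => hm z (by simp at hz ⊢; tauto))
      rw [List.map_cons] at ih'
      simp only [List.map_cons, List.chain'_cons]
      exact and_congr hab ih'

/-- link between the `Alternates` filter and `patF`. -/
lemma alternates_iff_patF {x y : α} (hxy : x ≠ y) (w : List α) :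
    (w.filter fun z => decide (z = x ∨ z = y)).Chain' (· ≠ ·) ↔
      (patF x y w).Chain' (· ≠ ·) := by
  rw [patF_eq_map hxy]
  exact chain'_map_decide hxy (fun z hz => by
    have := List.mem_filter.mp hz
    simpa using this.2)








lemma pair_sublist_or {x y : α} {l : List α} (hx : x ∈ l) (hy : y ∈ l) (hxy : x ≠ y) :
    [x, y] <+ l ∨ [y, x] <+ l := by
  induction l with
  | nil => cases hx
  | cons a l ih =>
    by_cases hax : a = x
    · subst hax
      have hy' : y ∈ l := by
        cases hy with
        | head => exact absurd rfl hxy.symm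
        | tail _ h => exact h
      exact Or.inl ((List.singleton_sublist.mpr hy').cons_cons _)
    · by_cases hay : a = y
      · subst hay
        have hx' : x ∈ l := by
          cases hx with
          | head => exact absurd rfl hxy
          | tail _ h => exact h
        exact Or.inr ((List.singleton_sublist.mpr hx').cons_cons _)
      · have hx' : x ∈ l := by
          cases hx with
          | head => exact absurd rfl (fun h : x = x => hax rfl)
          | tail _ h => exact h
        have hy' : y ∈ l := by
          cases hy with
          | head => exact absurd rfl (fun h : y = y => hay rfl)
          | tail _ h => exact h
        rcases ih hx' hy' with h | h
        · exact Or.inl (h.cons _)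
        · exact Or.inr (h.cons _)

lemma sublist_pair_split {a b : α} : ∀ {l : List α}, [a, b] <+ l →
    ∃ u v t, l = u ++ a :: v ++ b :: t := by
  intro l
  induction l with
  | nil => intro h; exact absurd (List.eq_nil_of_sublist_nil h) (by simp)
  | cons c l ih =>
    intro h
    cases h with
    | cons _ h' =>
      obtain ⟨u, v, t, rfl⟩ := ih h'
      exact ⟨c :: u, v, t, rfl⟩
    | cons_cons _ h' =>
      obtain ⟨s, t, rfl⟩ := List.append_of_mem (List.singleton_sublist.mp h')
      exact ⟨[], s, t, rfl⟩

lemma flatMap_single {y : α} {l : List α} (f : α → List γ) (hy : y ∈ l) (hnd : l.Nodup)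
    (hf : ∀ z ∈ l, z ≠ y → f z = []) : l.flatMap f = f y := by
  induction l with
  | nil => cases hy
  | cons a l ih =>
    rw [List.flatMap_cons]
    rw [List.nodup_cons] at hnd
    by_cases hay : a = y
    · subst hay
      have : l.flatMap f = [] := by
        apply List.flatMap_eq_nil_iff.mpr
        intro z hz
        exact hf z (by simp [hz]) (fun e => hnd.1 (e ▸ hz))
      rw [this, List.append_nil]
    · have hy' : y ∈ l := by
        cases hy with
        | head => exact absurd rfl hay
        | tail _ h => exact h
      rw [hf a (by simp) hay, List.nil_append]
      exact ih hy' hnd.2 (fun z hz => hf z (by simp [hz]))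

lemma flatMap_pair {x y : α} {l : List α} (f : α → List γ) (hs : [x, y] <+ l) (hnd : l.Nodup)
    (hf : ∀ z ∈ l, z ≠ x → z ≠ y → f z = []) : l.flatMap f = f x ++ f y := by
  have hxy : x ≠ y := by
    have := hs.nodup hnd
    simp at this
    exact this
  induction l with
  | nil => exact absurd (List.eq_nil_of_sublist_nil hs) (by simp)
  | cons a l ih =>
    rw [List.flatMap_cons]
    rw [List.nodup_cons] at hnd
    cases hs with
    | cons _ h' =>
      have hx : x ∈ l := h'.subset (by simp)
      have hy : y ∈ l := h'.subset (by simp)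
      have hax : a ≠ x := fun e => hnd.1 (e ▸ hx)
      have hay : a ≠ y := fun e => hnd.1 (e ▸ hy)
      rw [hf a (by simp) hax hay, List.nil_append]
      exact ih h' hnd.2 (fun z hz hzx hzy => hf z (by simp [hz]) hzx hzy)
    | cons_cons _ h' =>
      have hy : y ∈ l := List.singleton_sublist.mp h'
      congr 1
      exact flatMap_single f hy hnd.2
        (fun z hz hzy => hf z (by simp [hz]) (fun e => hnd.1 (e ▸ hz)) hzy)








lemma flatMap_congr' {l : List α} {f g : α → List γ} (h : ∀ z ∈ l, f z = g z) :
    l.flatMap f = l.flatMap g := by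
  induction l with
  | nil => rfl
  | cons a l ih =>
    rw [List.flatMap_cons, List.flatMap_cons, h a (by simp),
      ih (fun z hz => h z (by simp [hz]))]

lemma flatMap_ite_two {x y : α} {l : List α} (hxy : x ≠ y) (hs : [x, y] <+ l)
    (hnd : l.Nodup) (A B : List γ) :
    (l.flatMap fun z => if z = x then A else if z = y then B else []) = A ++ B := by
  rw [flatMap_pair _ hs hnd (fun z _ hzx hzy => by
    show (if z = x then A else if z = y then B else []) = []
    rw [if_neg hzx, if_neg hzy])]
  show (if x = x then A else if x = y then B else []) ++
    (if y = x then A else if y = y then B else []) = A ++ B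
  rw [if_pos rfl, if_neg (Ne.symm hxy), if_pos rfl]

lemma flatMap_ite_one {x : α} {l : List α} (hx : x ∈ l) (hnd : l.Nodup) (A : List γ) :
    (l.flatMap fun z => if z = x then A else []) = A := by
  rw [flatMap_single _ hx hnd (fun z _ hzx => by
    show (if z = x then A else []) = []
    rw [if_neg hzx])]
  show (if x = x then A else []) = A
  rw [if_pos rfl]

/-- one occurrence of each pair `(z, c)`, grouped in blocks by `z` -/
def grid (σl : List α) (L : List β) : List (α × β) :=
  σl.flatMap fun z => L.map fun c => (z, c)

/-- one occurrence of each pair `(z, c)`, grouped in blocks by `c` -/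
def gridT (L : List β) (σl : List α) : List (α × β) :=
  L.flatMap fun c => σl.map fun z => (z, c)

lemma filterMap_ite_single {a : α} {l : List α} (v : γ) (ha : a ∈ l) (hnd : l.Nodup) :
    (l.filterMap fun c => if c = a then some v else none) = [v] := by
  induction l with
  | nil => cases ha
  | cons c l ih =>
    rw [List.nodup_cons] at hnd
    rw [List.filterMap_cons]
    by_cases hca : c = a
    · subst hca
      rw [if_pos rfl]
      have : (l.filterMap fun c' => if c' = c then some v else none) = [] := by
        apply List.filterMap_eq_nil_iff.mpr
        intro z hz
        rw [if_neg (fun e : z = c => hnd.1 (e ▸ hz))]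
      rw [this]
    · rw [if_neg hca]
      have ha' : a ∈ l := by
        cases ha with
        | head => exact absurd rfl hca
        | tail _ h => exact h
      exact ih ha' hnd.2

lemma filterMap_ite_none {a : α} {l : List α} (v : γ) (ha : a ∉ l) :
    (l.filterMap fun c => if c = a then some v else none) = [] := by
  apply List.filterMap_eq_nil_iff.mpr
  intro z hz
  rw [if_neg (fun e : z = a => ha (e ▸ hz))]

section GridPat
variable {V : Type*} {U : Type*} [DecidableEq V] [DecidableEq U]

/-- pattern of `(x,a)` vs `(y,b)` (distinct first coordinates) in a single `z`-block -/
lemma patF_block {x y : V} {a b : U} (hxy : x ≠ y) (z : V) (L : List U) :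
    patF (x, a) (y, b) (L.map fun c => (z, c)) =
      if z = x then (L.filterMap fun c => if c = a then some true else none)
      else if z = y then (L.filterMap fun c => if c = b then some false else none)
      else [] := by
  unfold patF
  rw [List.filterMap_map]
  by_cases hzx : z = x
  · subst hzx
    rw [if_pos rfl]
    apply List.filterMap_congr
    intro c _
    simp only [Function.comp_apply, Prod.mk.injEq]
    by_cases hca : c = a
    · simp [hca]
    · simp [hca, hxy]
  · rw [if_neg hzx]
    by_cases hzy : z = y
    · subst hzy
      rw [if_pos rfl]
      apply List.filterMap_congr
      intro c _
      simp only [Function.comp_apply, Prod.mk.injEq]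
      by_cases hcb : c = b
      · simp [hcb, hzx]
      · simp [hcb, hzx]
    · rw [if_neg hzy]
      apply List.filterMap_eq_nil_iff.mpr
      intro c _
      simp [hzx, hzy]

/-- pattern of a pair with distinct first coordinates in a `grid` -/
lemma patF_grid_two {x y : V} {a b : U} {σl : List V} (hxy : x ≠ y)
    (hs : [x, y] <+ σl) (hnd : σl.Nodup) (L : List U) :
    patF (x, a) (y, b) (grid σl L) =
      (L.filterMap fun c => if c = a then some true else none) ++
      (L.filterMap fun c => if c = b then some false else none) := by
  unfold grid
  rw [patF_flatMap, flatMap_congr' (fun z _ => patF_block hxy z L),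
    flatMap_ite_two hxy hs hnd]

/-- pattern of a pair with the same first coordinate in a `grid` -/
lemma patF_grid_row {x : V} {a b : U} {σl : List V} (hx : x ∈ σl) (hnd : σl.Nodup)
    (L : List U) :
    patF (x, a) (x, b) (grid σl L) = patF a b L := by
  unfold grid
  rw [patF_flatMap]
  have hb : ∀ z : V, patF (x, a) (x, b) (L.map fun c => (z, c)) =
      if z = x then patF a b L else [] := by
    intro z
    unfold patF
    rw [List.filterMap_map]
    by_cases hzx : z = x
    · subst hzx
      rw [if_pos rfl]
      apply List.filterMap_congr
      intro c _
      simp only [Function.comp_apply, Prod.mk.injEq, true_and]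
    · rw [if_neg hzx]
      apply List.filterMap_eq_nil_iff.mpr
      intro c _
      simp [hzx]
  rw [flatMap_congr' (fun z _ => hb z), flatMap_ite_one hx hnd]

lemma flatMap_ite_eq_patF (x y : α) (w : List α) :
    (w.flatMap fun z => if z = x then [true] else if z = y then [false] else []) = patF x y w := by
  induction w with
  | nil => rfl
  | cons z w ih =>
    rw [List.flatMap_cons, ih]
    show _ = patF x y (z :: w)
    unfold patF
    rw [List.filterMap_cons]
    by_cases hx : z = x
    · rw [if_pos hx, if_pos hx]; rfl
    · rw [if_neg hx, if_neg hx]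
      by_cases hy : z = y
      · rw [if_pos hy, if_pos hy]; rfl
      · rw [if_neg hy, if_neg hy]; rfl

/-- pattern of a pair in a `gridT` (distinct second coordinates) -/
lemma patF_gridT {x y : V} {a b : U} {σl : List V} (hab : a ≠ b)
    (hx : x ∈ σl) (hy : y ∈ σl) (hnd : σl.Nodup) (w : List U) :
    patF (x, a) (y, b) (gridT w σl) = patF a b w := by
  unfold gridT
  rw [patF_flatMap]
  have hb : ∀ c : U, patF (x, a) (y, b) (σl.map fun z => (z, c)) =
      if c = a then [true] else if c = b then [false] else [] := by
    intro c
    unfold patF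
    rw [List.filterMap_map]
    by_cases hca : c = a
    · subst hca
      rw [if_pos rfl]
      have heq : ∀ z ∈ σl, ((fun t : V × U => if t = (x, c) then some true
          else if t = (y, b) then some false else none) ∘ fun z => (z, c)) z =
          (fun z => if z = x then some true else none) z := by
        intro z _
        simp only [Function.comp_apply, Prod.mk.injEq]
        by_cases hzx : z = x
        · simp [hzx]
        · simp [hzx, hab]
      rw [List.filterMap_congr heq]
      exact filterMap_ite_single true hx hnd
    · rw [if_neg hca]
      by_cases hcb : c = b
      · subst hcb
        rw [if_pos rfl]
        have heq : ∀ z ∈ σl, ((fun t : V × U => if t = (x, a) then some true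
            else if t = (y, c) then some false else none) ∘ fun z => (z, c)) z =
            (fun z => if z = y then some false else none) z := by
          intro z _
          simp only [Function.comp_apply, Prod.mk.injEq]
          by_cases hzy : z = y
          · simp [hzy, hca]
          · simp [hzy, hca]
        rw [List.filterMap_congr heq]
        exact filterMap_ite_single false hy hnd
      · rw [if_neg hcb]
        apply List.filterMap_eq_nil_iff.mpr
        intro z _
        simp [hca, hcb]
  rw [flatMap_congr' (fun c _ => hb c), flatMap_ite_eq_patF]

end GridPat



section MWord
open List
variable {V : Type*} {U : Type*} [DecidableEq V] [DecidableEq U]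

/-- The middle section of the representing word for the Cartesian product. -/
def Mword (σl : List V) (τl : List U) : List (V × U) :=
  grid σl (τl.take 1) ++ (List.range (τl.length - 1)).flatMap
    (fun s => grid σl (τl.drop (s+1) ++ τl.take (s+1)) ++ grid σl ((τl.drop (s+1)).take 1))

lemma nodup_rot {τl : List U} (hnd : τl.Nodup) (s : ℕ) :
    (τl.drop s ++ τl.take s).Nodup := by
  have h1 : (τl.take s ++ τl.drop s).Nodup := by rw [List.take_append_drop]; exact hnd
  exact (List.perm_append_comm).nodup h1

lemma mem_rot {τl : List U} {a : U} (ha : a ∈ τl) (s : ℕ) :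
    a ∈ τl.drop s ++ τl.take s := by
  rw [List.mem_append, or_comm, ← List.mem_append, List.take_append_drop]
  exact ha

/-- Pattern of a column pair `(x,a)`, `(y,a)` in `Mword` is a `[t,f]*` word. -/
lemma isTF_patF_Mword_col {x y : V} {a : U} {σl : List V} {τl : List U} (hxy : x ≠ y)
    (hs : [x, y] <+ σl) (hndσ : σl.Nodup) (hndτ : τl.Nodup) :
    IsTF (patF (x, a) (y, a) (Mword σl τl)) := by
  have key : ∀ L : List U, L.Nodup → IsTF (patF (x, a) (y, a) (grid σl L)) := by
    intro L hL
    rw [patF_grid_two hxy hs hndσ]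
    by_cases ha : a ∈ L
    · rw [filterMap_ite_single true ha hL, filterMap_ite_single false ha hL]
      exact IsTF_tf
    · rw [filterMap_ite_none true ha, filterMap_ite_none false ha]
      exact IsTF_nil
  unfold Mword
  rw [patF_append]
  apply IsTF.append
  · exact key _ ((List.take_sublist 1 τl).nodup hndτ)
  · rw [patF_flatMap]
    apply IsTF.flatMap
    intro s _
    rw [patF_append]
    apply IsTF.append
    · exact key _ (nodup_rot hndτ (s+1))
    · exact key _ (((List.take_sublist _ _).trans (List.drop_sublist _ _)).nodup hndτ)


lemma patF_sub_nil {a b : U} {l : List U} (ha : a ∉ l) (hb : b ∉ l) :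
    patF a b l = [] :=
  patF_eq_nil (fun c hc => ⟨fun e => ha (e ▸ hc), fun e => hb (e ▸ hc)⟩)

lemma patF_singleton_left (a b : U) : patF a b [a] = [true] := by
  rw [patF_cons, if_pos rfl]; rfl

lemma patF_b_block {a b : U} {t : List U} (hab : a ≠ b) (hat : a ∉ t) (hbt : b ∉ t) :
    patF a b (b :: t) = [false] := by
  rw [patF_cons, if_neg (Ne.symm hab), if_pos rfl, patF_sub_nil hat hbt]
  rfl

lemma patF_ab_block {a b : U} {v t : List U} (hab : a ≠ b) (hav : a ∉ v) (hbv : b ∉ v)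
    (hat : a ∉ t) (hbt : b ∉ t) :
    patF a b (a :: (v ++ b :: t)) = [true, false] := by
  rw [patF_cons, if_pos rfl, patF_append, patF_sub_nil hav hbv, patF_b_block hab hat hbt]
  rfl

lemma range'_split (s k n : ℕ) (h : k ≤ n) :
    List.range' s n = List.range' s k ++ List.range' (s + k) (n - k) := by
  have h2 := List.range'_append (s := s) (m := k) (n := n - k) (step := 1)
  rw [one_mul, Nat.add_comm k (n - k)] at h2
  have h3 : n - k + k = n := Nat.sub_add_cancel h
  calc List.range' s n = List.range' s (n - k + k) := by rw [h3]
    _ = _ := h2.symm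

lemma range_split2 {q n : ℕ} (hq : q < n) :
    List.range n = (List.range' 0 q ++ [q]) ++ List.range' (q+1) (n - q - 1) := by
  rw [List.range_eq_range', range'_split 0 q n (by omega), range'_split (0+q) 1 (n-q) (by omega)]
  simp only [Nat.zero_add, List.range'_one, List.append_assoc]

lemma range_split3 {p q n : ℕ} (hpq : p < q) (hqn : q < n) :
    List.range n = (((List.range' 0 p ++ [p]) ++ List.range' (p+1) (q - p - 1)) ++ [q])
      ++ List.range' (q+1) (n - q - 1) := by
  rw [range_split2 hqn, range'_split 0 p q (by omega), range'_split (0+p) 1 (q-p) (by omega)]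
  simp only [Nat.zero_add, List.range'_one, List.append_assoc]

lemma flatMap_range'_const {f : ℕ → List Bool} {C : List Bool} :
    ∀ (len lo : ℕ), (∀ s ∈ List.range' lo len, f s = C) →
    (List.range' lo len).flatMap f = (List.replicate len C).flatten := by
  intro len
  induction len with
  | zero => intro lo _; rfl
  | succ n ih =>
    intro lo h
    rw [List.range'_succ, List.flatMap_cons, List.replicate_succ, List.flatten_cons,
      h lo (by rw [List.range'_succ]; exact List.mem_cons_self), ih (lo+1)
        (fun s hs => h s (by rw [List.range'_succ]; exact List.mem_cons_of_mem _ hs))]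

lemma flatMap_regions3 {g : ℕ → List Bool} {q n : ℕ} (hq : q < n) {C1 C3 : List Bool}
    (h1 : ∀ s, s < q → g s = C1) (h3 : ∀ s, q < s → s < n → g s = C3) :
    (List.range n).flatMap g =
      ((List.replicate q C1).flatten ++ g q) ++ (List.replicate (n - q - 1) C3).flatten := by
  rw [range_split2 hq, List.flatMap_append, List.flatMap_append,
    flatMap_range'_const q 0 (fun s hs => h1 s (by
      have := List.mem_range'_1.mp hs; omega)),
    flatMap_range'_const (n - q - 1) (q+1) (fun s hs => h3 s
      (by have := List.mem_range'_1.mp hs; omega)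
      (by have := List.mem_range'_1.mp hs; omega))]
  simp

lemma flatMap_regions5 {g : ℕ → List Bool} {p q n : ℕ} (hpq : p < q) (hqn : q < n)
    {C1 C3 C5 : List Bool}
    (h1 : ∀ s, s < p → g s = C1) (h3 : ∀ s, p < s → s < q → g s = C3)
    (h5 : ∀ s, q < s → s < n → g s = C5) :
    (List.range n).flatMap g =
      (((((List.replicate p C1).flatten ++ g p) ++ (List.replicate (q - p - 1) C3).flatten)
        ++ g q) ++ (List.replicate (n - q - 1) C5).flatten) := by
  rw [range_split3 hpq hqn, List.flatMap_append, List.flatMap_append, List.flatMap_append,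
    List.flatMap_append,
    flatMap_range'_const p 0 (fun s hs => h1 s (by have := List.mem_range'_1.mp hs; omega)),
    flatMap_range'_const (q - p - 1) (p+1) (fun s hs => h3 s
      (by have := List.mem_range'_1.mp hs; omega) (by have := List.mem_range'_1.mp hs; omega)),
    flatMap_range'_const (n - q - 1) (q+1) (fun s hs => h5 s
      (by have := List.mem_range'_1.mp hs; omega) (by have := List.mem_range'_1.mp hs; omega))]
  simp

lemma altb_append_odd1 (b : Bool) (m : ℕ) :
    altb b (1 + m) = altb b 1 ++ altb (!b) m := by
  rw [altb_append]; norm_num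

lemma flatten_replicate_tf (k : ℕ) : (List.replicate k [true, false]).flatten = altb true (2*k) := by
  simpa using flatten_replicate_pair true k

lemma flatten_replicate_ft (k : ℕ) : (List.replicate k [false, true]).flatten = altb false (2*k) := by
  simpa using flatten_replicate_pair false k

lemma altb_glue5 (c1 c3 c5 N : ℕ) (h : N = 2*c1 + (3 + (2*c3 + (3 + 2*c5)))) :
    altb true (2*c1) ++ ([true,false,true] ++ (altb false (2*c3) ++
      ([false,true,false] ++ altb true (2*c5)))) = altb true N := by
  rw [h, altb_append_even, altb_append_odd3, altb_append_even, altb_append_odd3]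
  simp [List.append_assoc, altb]

lemma altb_glue3 (c3 c5 N : ℕ) (h : N = 1 + (2*c3 + (3 + 2*c5))) :
    [true] ++ (altb false (2*c3) ++ ([false,true,false] ++ altb true (2*c5))) = altb true N := by
  rw [h, altb_append_odd1, altb_append_even, altb_append_odd3]
  simp [List.append_assoc, altb]

/-- Pattern of a row pair `(x,a)`, `(x,b)` in `Mword`: perfect alternation. -/
lemma patF_Mword_row {x : V} {a b : U} {σl : List V} {τl : List U}
    (hx : x ∈ σl) (hndσ : σl.Nodup) (hs : [a, b] <+ τl) (hndτ : τl.Nodup) :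
    patF (x, a) (x, b) (Mword σl τl) = altb true (2 * τl.length) := by
  classical
  obtain ⟨u, v, t, hsplit0⟩ := sublist_pair_split hs
  have hsplit : τl = u ++ (a :: (v ++ b :: t)) := by rw [hsplit0]; simp
  clear hsplit0
  have hab : a ≠ b := by
    have h := hs.nodup hndτ
    simp at h
    exact h
  have hnd' := hndτ
  rw [hsplit] at hnd'
  have h1 := List.nodup_append.mp hnd'
  have hau : a ∉ u := fun h => h1.2.2 _ h _ (by simp) rfl
  have hbu : b ∉ u := fun h => h1.2.2 _ h _ (by simp) rfl
  have h2 := List.nodup_cons.mp h1.2.1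
  have hav : a ∉ v := fun h => h2.1 (by simp [h])
  have hat : a ∉ t := fun h => h2.1 (by simp [h])
  have h3 := List.nodup_append.mp h2.2
  have hbv : b ∉ v := fun h => h3.2.2 _ h _ (by simp) rfl
  have hbt : b ∉ t := (List.nodup_cons.mp h3.2.1).1
  have pu : ∀ {L : List U}, L ⊆ u → patF a b L = [] :=
    fun hsub => patF_sub_nil (fun h => hau (hsub h)) (fun h => hbu (hsub h))
  have pv : ∀ {L : List U}, L ⊆ v → patF a b L = [] :=
    fun hsub => patF_sub_nil (fun h => hav (hsub h)) (fun h => hbv (hsub h))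
  have pt : ∀ {L : List U}, L ⊆ t → patF a b L = [] :=
    fun hsub => patF_sub_nil (fun h => hat (hsub h)) (fun h => hbt (hsub h))
  set ib := u.length + v.length + 1 with hib
  have hm : τl.length = u.length + v.length + t.length + 2 := by
    rw [hsplit]; simp; omega
  -- alternative decompositions
  have e1 : τl = (u ++ [a]) ++ (v ++ b :: t) := by rw [hsplit]; simp
  have e2 : τl = (u ++ (a :: (v ++ [b]))) ++ t := by rw [hsplit]; simp
  have el1 : (u ++ [a]).length = u.length + 1 := by simp
  have el2 : (u ++ (a :: (v ++ [b]))).length = ib + 1 := by simp; omega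
  -- drop patterns
  have hdrop1 : ∀ s, s ≤ u.length → patF a b (τl.drop s) = [true, false] := by
    intro s hsle
    rw [hsplit, List.drop_append_of_le_length hsle, patF_append,
      pu (List.drop_subset _ _), patF_ab_block hab hav hbv hat hbt]
    rfl
  have hdrop2 : ∀ s, u.length < s → s ≤ ib → patF a b (τl.drop s) = [false] := by
    intro s hgt hle
    rw [e1, show s = (u ++ [a]).length + (s - u.length - 1) by rw [el1]; omega,
      List.drop_length_add_append,
      List.drop_append_of_le_length (by omega : s - u.length - 1 ≤ v.length),
      patF_append, pv (List.drop_subset _ _), patF_b_block hab hat hbt]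
    rfl
  have hdrop3 : ∀ s, ib < s → patF a b (τl.drop s) = [] := by
    intro s hgt
    rw [e2, show s = (u ++ (a :: (v ++ [b]))).length + (s - ib - 1) by rw [el2]; omega,
      List.drop_length_add_append]
    exact pt (List.drop_subset _ _)
  -- take patterns
  have htake1 : ∀ s, s ≤ u.length → patF a b (τl.take s) = [] := by
    intro s hsle
    rw [hsplit, List.take_append_of_le_length hsle]
    exact pu (List.take_subset _ _)
  have htake2 : ∀ s, u.length < s → s ≤ ib → patF a b (τl.take s) = [true] := by
    intro s hgt hle
    rw [e1, show s = (u ++ [a]).length + (s - u.length - 1) by rw [el1]; omega,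
      List.take_length_add_append,
      List.take_append_of_le_length (by omega : s - u.length - 1 ≤ v.length),
      patF_append, patF_append, pu (fun c hc => hc), patF_singleton_left,
      pv (List.take_subset _ _)]
    rfl
  have htake3 : ∀ s, ib < s → patF a b (τl.take s) = [true, false] := by
    intro s hgt
    rw [e2, show s = (u ++ (a :: (v ++ [b]))).length + (s - ib - 1) by rw [el2]; omega,
      List.take_length_add_append, patF_append, patF_append, pu (fun c hc => hc),
      pt (List.take_subset _ _)]
    have hblk : patF a b (a :: (v ++ [b])) = [true, false] := by
      have h5 := patF_ab_block (t := ([] : List U)) hab hav hbv (by simp) (by simp)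
      simpa using h5
    rw [hblk]
    rfl
  -- take-1-of-drop patterns
  have hD1 : ∀ s, s < u.length → patF a b ((τl.drop s).take 1) = [] := by
    intro s hlt
    rw [hsplit, List.drop_append_of_le_length (by omega : s ≤ u.length),
      List.take_append_of_le_length (by simp; omega)]
    exact pu (fun c hc => List.drop_subset _ _ (List.take_subset _ _ hc))
  have hD2 : patF a b ((τl.drop u.length).take 1) = [true] := by
    rw [hsplit, List.drop_left]
    exact patF_singleton_left a b
  have hD3 : ∀ s, u.length < s → s < ib → patF a b ((τl.drop s).take 1) = [] := by
    intro s hgt hlt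
    rw [e1, show s = (u ++ [a]).length + (s - u.length - 1) by rw [el1]; omega,
      List.drop_length_add_append,
      List.drop_append_of_le_length (by omega : s - u.length - 1 ≤ v.length),
      List.take_append_of_le_length (by simp; omega)]
    exact pv (fun c hc => List.drop_subset _ _ (List.take_subset _ _ hc))
  have hD4 : patF a b ((τl.drop ib).take 1) = [false] := by
    have e3 : τl = (u ++ (a :: v)) ++ (b :: t) := by rw [hsplit]; simp
    have el3 : (u ++ (a :: v)).length = ib := by simp; omega
    rw [e3, show ib = (u ++ (a :: v)).length by rw [el3], List.drop_left]
    show patF a b (b :: List.take 0 t) = [false]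
    rw [List.take_zero, patF_b_block hab (by simp) (by simp)]
  have hD5 : ∀ s, ib < s → patF a b ((τl.drop s).take 1) = [] := by
    intro s hgt
    rw [e2, show s = (u ++ (a :: (v ++ [b]))).length + (s - ib - 1) by rw [el2]; omega,
      List.drop_length_add_append]
    exact pt (fun c hc => List.drop_subset _ _ (List.take_subset _ _ hc))
  -- the blocks of the flatMap
  set B : ℕ → List Bool := fun s =>
    (patF a b (τl.drop s) ++ patF a b (τl.take s)) ++ patF a b ((τl.drop s).take 1) with hB
  have hblocks : ∀ s' ∈ List.range (τl.length - 1),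
      patF (x,a) (x,b) (grid σl (τl.drop (s'+1) ++ τl.take (s'+1))
        ++ grid σl ((τl.drop (s'+1)).take 1)) = B (s'+1) := by
    intro s' _
    rw [patF_append, patF_grid_row hx hndσ _, patF_grid_row hx hndσ _, patF_append]
  -- region values
  have hB1 : ∀ s, 1 ≤ s → s < u.length → B s = [true, false] := by
    intro s h1' h2'
    rw [hB]
    simp only
    rw [hdrop1 s (by omega), htake1 s (by omega), hD1 s (by omega)]
    rfl
  have hB2 : 1 ≤ u.length → B u.length = [true, false, true] := by
    intro h1'
    rw [hB]
    simp only
    rw [hdrop1 _ (le_refl _), htake1 _ (le_refl _), hD2]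
    rfl
  have hB3 : ∀ s, u.length < s → s < ib → B s = [false, true] := by
    intro s h1' h2'
    rw [hB]
    simp only
    rw [hdrop2 s (by omega) (by omega), htake2 s (by omega) (by omega), hD3 s (by omega) (by omega)]
    rfl
  have hB4 : B ib = [false, true, false] := by
    rw [hB]
    simp only
    rw [hdrop2 ib (by omega) (le_refl _), htake2 ib (by omega) (le_refl _), hD4]
    rfl
  have hB5 : ∀ s, ib < s → B s = [true, false] := by
    intro s h1'
    rw [hB]
    simp only
    rw [hdrop3 s (by omega), htake3 s (by omega), hD5 s (by omega)]
    rfl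
  -- assemble
  unfold Mword
  rw [patF_append, patF_flatMap, patF_grid_row hx hndσ, flatMap_congr' hblocks]
  by_cases hu : u.length = 0
  · -- a is the head of τl
    have hu' : u = [] := List.length_eq_zero_iff.mp hu
    have hpre : patF a b (τl.take 1) = [true] := by
      rw [hsplit, hu', List.nil_append]
      show patF a b (a :: List.take 0 (v ++ b :: t)) = [true]
      rw [List.take_zero]
      exact patF_singleton_left a b
    rw [hpre]
    rw [flatMap_regions3 (g := fun s' => B (s'+1)) (q := v.length) (n := τl.length - 1)
      (by omega)
      (fun s hs => hB3 (s+1) (by omega) (by omega))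
      (fun s hs1 hs2 => hB5 (s+1) (by omega))]
    have hq : B (v.length + 1) = [false, true, false] := by
      rw [show v.length + 1 = ib by omega]
      exact hB4
    rw [hq, flatten_replicate_ft, flatten_replicate_tf]
    simp only [List.append_assoc]
    exact altb_glue3 _ _ _ (by omega)
  · -- a is not the head
    have hpre : patF a b (τl.take 1) = [] := htake1 1 (by omega)
    rw [hpre]
    rw [flatMap_regions5 (g := fun s' => B (s'+1)) (p := u.length - 1)
      (q := ib - 1) (n := τl.length - 1) (by omega) (by omega)
      (fun s hs => hB1 (s+1) (by omega) (by omega))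
      (fun s hs1 hs2 => hB3 (s+1) (by omega) (by omega))
      (fun s hs1 hs2 => hB5 (s+1) (by omega))]
    have hp : B (u.length - 1 + 1) = [true, false, true] := by
      rw [show u.length - 1 + 1 = u.length by omega]
      exact hB2 (by omega)
    have hq : B (ib - 1 + 1) = [false, true, false] := by
      rw [show ib - 1 + 1 = ib by omega]
      exact hB4
    rw [hp, hq, flatten_replicate_ft, flatten_replicate_tf, flatten_replicate_tf]
    simp only [List.append_assoc]
    exact altb_glue5 _ _ _ _ (by omega)


lemma chain'_of_append_left {R : V → V → Prop} {A B : List V} (h : (A ++ B).Chain' R) :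
    A.Chain' R := (List.chain'_append.mp h).1

lemma chain'_of_append_right {R : V → V → Prop} {A B : List V} (h : (A ++ B).Chain' R) :
    B.Chain' R := (List.chain'_append.mp h).2.1

lemma chain'_middle {R : V → V → Prop} {A C B : List V} (h : (A ++ (C ++ B)).Chain' R) :
    C.Chain' R := chain'_of_append_left (chain'_of_append_right h)

/-- Break of a diagonal pair in `Mword`, when `b` is not the first letter of `τl`. -/
lemma not_chain'_patF_Mword_diag {x y : V} {a b : U} {σl : List V} {τl : List U}
    (hxy : x ≠ y) (hs : [x, y] <+ σl) (hndσ : σl.Nodup) (hndτ : τl.Nodup)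
    (hab : a ≠ b) (ha : a ∈ τl) {p0 q0 : List U} (hbsplit : τl = p0 ++ b :: q0)
    (hp : p0 ≠ []) :
    ¬ (patF (x, a) (y, b) (Mword σl τl)).Chain' (· ≠ ·) := by
  intro hch
  have hm : τl.length = p0.length + q0.length + 1 := by rw [hbsplit]; simp; omega
  have hp1 : 1 ≤ p0.length := by
    cases p0 with
    | nil => exact absurd rfl hp
    | cons _ _ => simp
  -- the block at index s' = p0.length - 1 has pattern [true, false, false]
  set s' := p0.length - 1 with hs'
  have hs'mem : s' ∈ List.range (τl.length - 1) := by
    rw [List.mem_range]; omega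
  obtain ⟨A, B, hAB⟩ := List.append_of_mem hs'mem
  have hDrop : τl.drop (s' + 1) = b :: q0 := by
    rw [hbsplit, show s' + 1 = p0.length by omega, List.drop_left]
  have hblock : patF (x, a) (y, b) (grid σl (τl.drop (s'+1) ++ τl.take (s'+1))
      ++ grid σl ((τl.drop (s'+1)).take 1)) = [true, false, false] := by
    rw [patF_append, patF_grid_two hxy hs hndσ, patF_grid_two hxy hs hndσ]
    have hrot_nodup := nodup_rot hndτ (s'+1)
    have hbτ : b ∈ τl := by rw [hbsplit]; simp
    rw [filterMap_ite_single true (mem_rot ha (s'+1)) hrot_nodup,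
      filterMap_ite_single false (mem_rot hbτ (s'+1)) hrot_nodup]
    have hD : (τl.drop (s'+1)).take 1 = [b] := by
      rw [hDrop]
      show b :: List.take 0 q0 = [b]
      rw [List.take_zero]
    rw [hD, filterMap_ite_none true (by simpa using hab), filterMap_ite_single false
      (by simp) (by simp)]
    rfl
  -- extract the block from the chain
  unfold Mword at hch
  rw [patF_append, patF_flatMap, hAB, List.flatMap_append, List.flatMap_cons] at hch
  rw [hblock] at hch
  have h2 := chain'_of_append_right hch
  have h3 := chain'_of_append_right h2
  have h4 := chain'_of_append_left h3
  exact (List.chain'_cons.mp (List.chain'_cons.mp h4).2).1 rfl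

/-- When `b` is the first letter of `τl`, the `Mword` pattern of a diagonal pair
starts with `false`. -/
lemma patF_Mword_diag_head {x y : V} {a b : U} {σl : List V} {τl : List U}
    (hxy : x ≠ y) (hs : [x, y] <+ σl) (hndσ : σl.Nodup)
    (hab : a ≠ b) {q0 : List U} (hbsplit : τl = b :: q0) :
    ∃ r, patF (x, a) (y, b) (Mword σl τl) = false :: r := by
  unfold Mword
  rw [patF_append, patF_grid_two hxy hs hndσ]
  have ht1 : τl.take 1 = [b] := by
    rw [hbsplit]
    show b :: List.take 0 q0 = [b]
    rw [List.take_zero]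
  rw [ht1, filterMap_ite_none true (by simpa using hab),
    filterMap_ite_single false (by simp) (by simp)]
  exact ⟨_, rfl⟩

lemma count_map_pair_fst (z : V) (a : U) (L : List U) :
    (L.map fun c => (z, c)).count (z, a) = L.count a := by
  induction L with
  | nil => rfl
  | cons c L ihL =>
    rw [List.map_cons]
    by_cases hca : c = a
    · subst hca
      rw [List.count_cons_self, List.count_cons_self, ihL]
    · rw [List.count_cons_of_ne (by simp [hca] : ((z,c) : V × U) ≠ (z,a)),
        List.count_cons_of_ne hca, ihL]

lemma count_map_pair_snd (c : U) (x : V) (σl : List V) :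
    (σl.map fun z => (z, c)).count (x, c) = σl.count x := by
  induction σl with
  | nil => rfl
  | cons z σL ihL =>
    rw [List.map_cons]
    by_cases hzx : z = x
    · subst hzx
      rw [List.count_cons_self, List.count_cons_self, ihL]
    · rw [List.count_cons_of_ne (by simp [hzx] : ((z,c) : V × U) ≠ (x,c)),
        List.count_cons_of_ne hzx, ihL]

-- counting lemmas
lemma count_grid (x : V) (a : U) (σl : List V) (L : List U) :
    (grid σl L).count (x, a) = σl.count x * L.count a := by
  induction σl with
  | nil => simp [grid]
  | cons z σl ih =>
    unfold grid at ih ⊢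
    rw [List.flatMap_cons, List.count_append, ih]
    by_cases hzx : z = x
    · subst hzx
      rw [count_map_pair_fst, List.count_cons_self]
      ring
    · have : (L.map fun c => (z, c)).count (x, a) = 0 := by
        rw [List.count_eq_zero]
        intro h
        obtain ⟨c, _, hc⟩ := List.mem_map.mp h
        exact hzx (congrArg Prod.fst hc)
      rw [this, List.count_cons_of_ne hzx]
      omega

lemma count_gridT (x : V) (a : U) (σl : List V) (w : List U) :
    (gridT w σl).count (x, a) = w.count a * σl.count x := by
  induction w with
  | nil => simp [gridT]
  | cons c w ih =>
    unfold gridT at ih ⊢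
    rw [List.flatMap_cons, List.count_append, ih]
    by_cases hca : c = a
    · subst hca
      rw [count_map_pair_snd, List.count_cons_self]
      ring
    · have : (σl.map fun z => (z, c)).count (x, a) = 0 := by
        rw [List.count_eq_zero]
        intro h
        obtain ⟨z, _, hz⟩ := List.mem_map.mp h
        exact hca (congrArg Prod.snd hz)
      rw [this, List.count_cons_of_ne hca]
      omega

lemma sum_map_add (L : List ℕ) (f g : ℕ → ℕ) :
    (L.map fun s => f s + g s).sum = (L.map f).sum + (L.map g).sum := by
  induction L with
  | nil => rfl
  | cons s L ih => simp [ih]; omega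

lemma flatMap_take_one_drop : ∀ (l : List U),
    (List.range l.length).flatMap (fun s => (l.drop s).take 1) = l := by
  intro l
  induction l with
  | nil => rfl
  | cons c l ih =>
    rw [List.length_cons, List.range_succ_eq_map, List.flatMap_cons, List.flatMap_map]
    have h1 : (List.drop 0 (c :: l)).take 1 = [c] := by
      show c :: List.take 0 l = [c]
      rw [List.take_zero]
    have h2 : (List.range l.length).flatMap (fun s => (((c :: l).drop s.succ).take 1))
        = (List.range l.length).flatMap (fun s => (l.drop s).take 1) := by
      apply flatMap_congr'
      intro s _
      rfl
    rw [h1, h2, ih]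
    rfl

lemma count_Mword {x : V} {a : U} {σl : List V} {τl : List U}
    (hx : x ∈ σl) (hndσ : σl.Nodup) (ha : a ∈ τl) (hndτ : τl.Nodup) :
    (Mword σl τl).count (x, a) = τl.length := by
  unfold Mword
  rw [List.count_append, count_grid, List.count_flatMap]
  have hcx : σl.count x = 1 := List.count_eq_one_of_mem hndσ hx
  have hca : τl.count a = 1 := List.count_eq_one_of_mem hndτ ha
  have hbody : ∀ s ∈ List.range (τl.length - 1),
      ((List.count (x,a)) ∘ (fun s => grid σl (τl.drop (s+1) ++ τl.take (s+1))
        ++ grid σl ((τl.drop (s+1)).take 1))) s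
      = 1 + ((τl.drop (s+1)).take 1).count a := by
    intro s _
    show (grid σl (τl.drop (s+1) ++ τl.take (s+1)) ++ grid σl ((τl.drop (s+1)).take 1)).count (x,a) = _
    rw [List.count_append, count_grid, count_grid, hcx]
    have hrot : (τl.drop (s+1) ++ τl.take (s+1)).count a = 1 := by
      rw [List.count_append, Nat.add_comm, ← List.count_append, List.take_append_drop]
      exact hca
    rw [hrot]
    omega
  rw [List.map_congr_left hbody, sum_map_add _ (fun _ => 1) (fun s => ((τl.drop (s+1)).take 1).count a)]
  have hone : ((List.range (τl.length - 1)).map fun _ => 1).sum = τl.length - 1 := by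
    rw [List.map_const', List.sum_replicate, smul_eq_mul, mul_one, List.length_range]
  have hsing : ((List.range (τl.length - 1)).map fun s => ((τl.drop (s+1)).take 1).count a).sum
      = (τl.drop 1).count a := by
    have h := flatMap_take_one_drop (τl.drop 1)
    rw [List.length_drop] at h
    have h2 : (List.range (τl.length - 1)).flatMap (fun s => (τl.drop (s+1)).take 1)
        = τl.drop 1 := by
      rw [← h]
      apply flatMap_congr'
      intro s _
      rw [List.drop_drop, Nat.add_comm]
    rw [show ((List.range (τl.length - 1)).map fun s => ((τl.drop (s+1)).take 1).count a)
        = (List.range (τl.length - 1)).map (List.count a ∘ (fun s => (τl.drop (s+1)).take 1))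
        from rfl, ← List.count_flatMap, h2]
  rw [hone, hsing, hcx]
  have hsum : (τl.take 1).count a + (τl.drop 1).count a = 1 := by
    rw [← List.count_append, List.take_append_drop]
    exact hca
  have hlen : 1 ≤ τl.length := by
    cases τl with
    | nil => cases ha
    | cons _ _ => simp
  omega


lemma patF_of_sublist_pair {a b : U} {τl : List U} (hs : [a, b] <+ τl) (hnd : τl.Nodup) :
    patF a b τl = [true, false] := by
  obtain ⟨u, v, t, hsplit0⟩ := sublist_pair_split hs
  have hsplit : τl = u ++ (a :: (v ++ b :: t)) := by rw [hsplit0]; simp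
  have hab : a ≠ b := by
    have h := hs.nodup hnd
    simp at h
    exact h
  have hnd' := hnd
  rw [hsplit] at hnd'
  have h1 := List.nodup_append.mp hnd'
  have hau : a ∉ u := fun h => h1.2.2 _ h _ (by simp) rfl
  have hbu : b ∉ u := fun h => h1.2.2 _ h _ (by simp) rfl
  have h2 := List.nodup_cons.mp h1.2.1
  have hav : a ∉ v := fun h => h2.1 (by simp [h])
  have hat : a ∉ t := fun h => h2.1 (by simp [h])
  have h3 := List.nodup_append.mp h2.2
  have hbv : b ∉ v := fun h => h3.2.2 _ h _ (by simp) rfl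
  have hbt : b ∉ t := (List.nodup_cons.mp h3.2.1).1
  rw [hsplit, patF_append, patF_sub_nil hau hbu, patF_ab_block hab hav hbv hat hbt]
  rfl

lemma flatMap_ite_const (w : List V) (x : V) (C : List Bool) :
    (w.flatMap fun z => if z = x then C else []) = (List.replicate (w.count x) C).flatten := by
  induction w with
  | nil => rfl
  | cons z w ih =>
    rw [List.flatMap_cons, ih]
    by_cases hzx : z = x
    · subst hzx
      rw [if_pos rfl, List.count_cons_self, List.replicate_succ, List.flatten_cons]
    · rw [if_neg hzx, List.count_cons_of_ne hzx, List.nil_append]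

/-- pattern of a (possibly equal-column) pair in the `S` part -/
lemma patF_S_two {x y : V} {a b : U} {τl : List U} (hxy : x ≠ y) (w : List V)
    (ha : a ∈ τl) (hb : b ∈ τl) (hnd : τl.Nodup) :
    patF (x, a) (y, b) (grid w τl) = patF x y w := by
  unfold grid
  rw [patF_flatMap, flatMap_congr' (fun z _ => by
    rw [patF_block hxy z τl, filterMap_ite_single true ha hnd, filterMap_ite_single false hb hnd]),
    flatMap_ite_eq_patF]

/-- pattern of a row pair in the `S` part -/
lemma patF_S_row {x : V} {a b : U} {τl : List U} (w : List V)
    (hs : [a, b] <+ τl) (hnd : τl.Nodup) :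
    patF (x, a) (x, b) (grid w τl) = altb true (2 * w.count x) := by
  unfold grid
  rw [patF_flatMap]
  have hblock : ∀ z : V, patF (x, a) (x, b) (τl.map fun c => (z, c)) =
      if z = x then patF a b τl else [] := by
    intro z
    unfold patF
    rw [List.filterMap_map]
    by_cases hzx : z = x
    · subst hzx
      rw [if_pos rfl]
      apply List.filterMap_congr
      intro c _
      simp only [Function.comp_apply, Prod.mk.injEq, true_and]
    · rw [if_neg hzx]
      apply List.filterMap_eq_nil_iff.mpr
      intro c _
      simp [hzx]
  rw [flatMap_congr' (fun z _ => by rw [hblock z, patF_of_sublist_pair hs hnd]),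
    flatMap_ite_const, flatten_replicate_tf]

lemma patF_blockT_col {x y : V} {a : U} (hxy : x ≠ y) (c : U) (σl : List V) :
    patF (x, a) (y, a) (σl.map fun z => (z, c)) = if c = a then patF x y σl else [] := by
  unfold patF
  rw [List.filterMap_map]
  by_cases hca : c = a
  · subst hca
    rw [if_pos rfl]
    apply List.filterMap_congr
    intro z _
    simp only [Function.comp_apply, Prod.mk.injEq, and_true]
  · rw [if_neg hca]
    apply List.filterMap_eq_nil_iff.mpr
    intro z _
    simp [hca]

/-- pattern of a column pair in the `T` part -/
lemma patF_T_col {x y : V} {a : U} {σl : List V} (hxy : x ≠ y)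
    (hs : [x, y] <+ σl) (hnd : σl.Nodup) (w : List U) :
    patF (x, a) (y, a) (gridT w σl) = altb true (2 * w.count a) := by
  unfold gridT
  rw [patF_flatMap,
    flatMap_congr' (fun c _ => by rw [patF_blockT_col hxy c σl, patF_of_sublist_pair hs hnd]),
    flatMap_ite_const, flatten_replicate_tf]

lemma patF_comm {x y : V} (hxy : x ≠ y) (w : List V) :
    patF y x w = (patF x y w).map (fun b => !b) := by
  induction w with
  | nil => rfl
  | cons z w ih =>
    rw [patF_cons, patF_cons, ih, List.map_append]
    congr 1
    by_cases hx : z = x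
    · subst hx
      rw [if_neg hxy, if_pos rfl, if_pos rfl]
      rfl
    · by_cases hy : z = y
      · subst hy
        rw [if_pos rfl, if_neg hx, if_pos rfl]
        rfl
      · rw [if_neg hy, if_neg hx, if_neg hx, if_neg hy]
        rfl

lemma chain'_patF_comm {x y : V} (hxy : x ≠ y) (w : List V) :
    (patF y x w).Chain' (· ≠ ·) ↔ (patF x y w).Chain' (· ≠ ·) := by
  rw [patF_comm hxy, List.chain'_map]
  constructor
  · intro h
    exact h.imp (fun {a b} hne e => hne (by rw [e]))
  · intro h
    exact h.imp (fun {a b} hne e => hne (Bool.not_inj e))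

end MWord

section Final
open List
variable {V : Type*} {U : Type*} [DecidableEq V] [DecidableEq U]

lemma alternates_iff' {x y : V} (hxy : x ≠ y) (w : List V) :
    Alternates x y w ↔ (patF x y w).Chain' (· ≠ ·) :=
  alternates_iff_patF hxy w

lemma sorted_pair_idx {w : List V} (hmem : ∀ v : V, v ∈ w) {σl : List V}
    (hsorted : σl.Pairwise (fun v v' => List.idxOf v w ≤ List.idxOf v' w))
    {x y : V} (hs : [x, y] <+ σl) (hxy : x ≠ y) :
    List.idxOf x w < List.idxOf y w := by
  have hp := List.Pairwise.sublist hs hsorted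
  have hle : List.idxOf x w ≤ List.idxOf y w := (List.pairwise_cons.mp hp).1 y (by simp)
  have hne : List.idxOf x w ≠ List.idxOf y w :=
    fun e => hxy ((List.idxOf_inj (hmem x)).mp e)
  omega

/-- case of a pair in a common `G`-fiber -/
lemma row_iff (H : SimpleGraph U) (w₁ : List V) (w₂ : List U) (σl : List V) (τl : List U)
    (hndσ : σl.Nodup) (hndτ : τl.Nodup) (hmemσ : ∀ v : V, v ∈ σl)
    (h₂ : Represents H w₂) {x : V} {a b : U} (hab : a ≠ b) (hor : [a, b] <+ τl)
    (hidx : List.idxOf a w₂ < List.idxOf b w₂) (haw : a ∈ w₂)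
    (hcab : w₂.count a = w₂.count b) :
    H.Adj a b ↔
      (patF (x, a) (x, b) (grid w₁ τl ++ (Mword σl τl ++ gridT w₂ σl))).Chain' (· ≠ ·) := by
  have hx : x ∈ σl := hmemσ x
  rw [patF_append, patF_append, patF_S_row w₁ hor hndτ, patF_Mword_row hx hndσ hor hndτ,
    patF_gridT hab hx hx hndσ w₂]
  constructor
  · intro hH
    have hT : patF a b w₂ = altb true (2 * w₂.count a) :=
      patF_eq_altb hab haw hidx ((alternates_iff' hab w₂).mp ((h₂.2 a b hab).mp hH)) rfl hcab.symm
    rw [hT]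
    exact IsTF.chain' (IsTF.append ⟨_, rfl⟩ (IsTF.append ⟨_, rfl⟩ ⟨_, rfl⟩))
  · intro hch
    exact (h₂.2 a b hab).mpr
      ((alternates_iff' hab w₂).mpr (chain'_of_append_right (chain'_of_append_right hch)))

/-- case of a pair in a common `H`-fiber -/
lemma col_iff (G : SimpleGraph V) (w₁ : List V) (w₂ : List U) (σl : List V) (τl : List U)
    (hndσ : σl.Nodup) (hndτ : τl.Nodup) (hmemτ : ∀ u : U, u ∈ τl)
    (h₁ : Represents G w₁) {x y : V} {a : U} (hxy : x ≠ y) (hor : [x, y] <+ σl)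
    (hidx : List.idxOf x w₁ < List.idxOf y w₁) (hxw : x ∈ w₁)
    (hcxy : w₁.count x = w₁.count y) :
    G.Adj x y ↔
      (patF (x, a) (y, a) (grid w₁ τl ++ (Mword σl τl ++ gridT w₂ σl))).Chain' (· ≠ ·) := by
  have ha : a ∈ τl := hmemτ a
  rw [patF_append, patF_append, patF_S_two hxy w₁ ha ha hndτ, patF_T_col hxy hor hndσ w₂]
  constructor
  · intro hG
    have hS : patF x y w₁ = altb true (2 * w₁.count x) :=
      patF_eq_altb hxy hxw hidx ((alternates_iff' hxy w₁).mp ((h₁.2 x y hxy).mp hG)) rfl hcxy.symm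
    rw [hS]
    exact IsTF.chain' (IsTF.append ⟨_, rfl⟩
      (IsTF.append (isTF_patF_Mword_col hxy hor hndσ hndτ) ⟨_, rfl⟩))
  · intro hch
    exact (h₁.2 x y hxy).mpr ((alternates_iff' hxy w₁).mpr (chain'_of_append_left hch))

/-- case of a diagonal pair: never alternates -/
lemma diag_not (G : SimpleGraph V) (w₁ : List V) (w₂ : List U) (σl : List V) (τl : List U)
    (hndσ : σl.Nodup) (hndτ : τl.Nodup) (hmemτ : ∀ u : U, u ∈ τl)
    (h₁ : Represents G w₁) {x y : V} {a b : U} (hxy : x ≠ y) (hab : a ≠ b)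
    (hor : [x, y] <+ σl) (hidx : List.idxOf x w₁ < List.idxOf y w₁) (hxw : x ∈ w₁)
    (hcxy : w₁.count x = w₁.count y) :
    ¬ (patF (x, a) (y, b) (grid w₁ τl ++ (Mword σl τl ++ gridT w₂ σl))).Chain' (· ≠ ·) := by
  have ha : a ∈ τl := hmemτ a
  have hb : b ∈ τl := hmemτ b
  rw [patF_append, patF_append, patF_S_two hxy w₁ ha hb hndτ]
  obtain ⟨p0, q0, hbsplit⟩ := List.append_of_mem hb
  by_cases hp : p0 = []
  · -- b is the head of τl
    have hbsplit' : τl = b :: q0 := by rw [hbsplit, hp, List.nil_append]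
    by_cases hG : G.Adj x y
    · have hS : patF x y w₁ = altb true (2 * w₁.count x) :=
        patF_eq_altb hxy hxw hidx ((alternates_iff' hxy w₁).mp ((h₁.2 x y hxy).mp hG)) rfl hcxy.symm
      obtain ⟨r, hM⟩ := patF_Mword_diag_head hxy hor hndσ hab hbsplit'
      intro hch
      rw [hS, hM] at hch
      have hk : w₁.count x ≠ 0 := fun e => (List.count_eq_zero.mp e) hxw
      have hlast : (altb true (2 * w₁.count x)).getLast? = some false := by
        have := altb_getLast?_even (k := w₁.count x) true hk
        simpa using this
      have hjunction := (List.chain'_append.mp hch).2.2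
      exact hjunction false (by rw [hlast]; rfl) false (by rw [List.cons_append]; rfl) rfl
    · intro hch
      exact hG ((h₁.2 x y hxy).mpr ((alternates_iff' hxy w₁).mpr (chain'_of_append_left hch)))
  · intro hch
    exact not_chain'_patF_Mword_diag hxy hor hndσ hndτ hab ha hbsplit hp (chain'_middle hch)

/-- The main construction: a uniform representing word of multiplicity
`k₁ + k₂ + |U|` for the Cartesian product. -/
lemma main_construction {V U : Type*} [Fintype V] [Fintype U] [DecidableEq V] [DecidableEq U]
    (G : SimpleGraph V) (H : SimpleGraph U) (k₁ k₂ : ℕ) (w₁ : List V) (w₂ : List U)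
    (h₁ : Represents G w₁) (hc₁ : ∀ v : V, w₁.count v = k₁)
    (h₂ : Represents H w₂) (hc₂ : ∀ u : U, w₂.count u = k₂) :
    ∃ w : List (V × U), Represents (G □ H) w ∧
      ∀ p : V × U, w.count p = k₁ + k₂ + Fintype.card U := by
  classical
  have hmemV : ∀ v : V, v ∈ w₁ := h₁.1
  have hmemU : ∀ u : U, u ∈ w₂ := h₂.1
  let rV : V → V → Prop := fun v v' => List.idxOf v w₁ ≤ List.idxOf v' w₁
  have decV : DecidableRel rV := fun a b => inferInstanceAs (Decidable (_ ≤ _))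
  have transV : IsTrans V rV := ⟨fun a b c hab hbc => Nat.le_trans hab hbc⟩
  have antiV : Std.Antisymm rV :=
    ⟨fun a b hab hba => (List.idxOf_inj (hmemV a)).mp (Nat.le_antisymm hab hba)⟩
  have totV : Std.Total rV := ⟨fun a b => Nat.le_total _ _⟩
  let σl : List V := @Finset.sort V Finset.univ rV decV transV antiV totV
  have hndσ : σl.Nodup := @Finset.sort_nodup V Finset.univ rV decV transV antiV totV
  have hmemσ : ∀ v : V, v ∈ σl :=
    fun v => (@Finset.mem_sort V Finset.univ rV decV transV antiV totV v).mpr (Finset.mem_univ v)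
  have hsortσ : σl.Pairwise rV := @Finset.pairwise_sort V Finset.univ rV decV transV antiV totV
  let rU : U → U → Prop := fun u u' => List.idxOf u w₂ ≤ List.idxOf u' w₂
  have decU : DecidableRel rU := fun a b => inferInstanceAs (Decidable (_ ≤ _))
  have transU : IsTrans U rU := ⟨fun a b c hab hbc => Nat.le_trans hab hbc⟩
  have antiU : Std.Antisymm rU :=
    ⟨fun a b hab hba => (List.idxOf_inj (hmemU a)).mp (Nat.le_antisymm hab hba)⟩
  have totU : Std.Total rU := ⟨fun a b => Nat.le_total _ _⟩
  let τl : List U := @Finset.sort U Finset.univ rU decU transU antiU totU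
  have hndτ : τl.Nodup := @Finset.sort_nodup U Finset.univ rU decU transU antiU totU
  have hmemτ : ∀ u : U, u ∈ τl :=
    fun u => (@Finset.mem_sort U Finset.univ rU decU transU antiU totU u).mpr (Finset.mem_univ u)
  have hsortτ : τl.Pairwise rU := @Finset.pairwise_sort U Finset.univ rU decU transU antiU totU
  have hlenτ : τl.length = Fintype.card U := by
    rw [@Finset.length_sort U Finset.univ rU decU transU antiU totU, Finset.card_univ]
  refine ⟨grid w₁ τl ++ (Mword σl τl ++ gridT w₂ σl), ⟨?_, ?_⟩, ?_⟩
  · -- membership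
    rintro ⟨x, a⟩
    apply List.mem_append.mpr
    left
    exact List.mem_flatMap.mpr ⟨x, hmemV x, List.mem_map.mpr ⟨a, hmemτ a, rfl⟩⟩
  · -- adjacency
    rintro ⟨x, a⟩ ⟨y, b⟩ hpq
    by_cases hxy : x = y
    · subst hxy
      have hab : a ≠ b := fun e => hpq (by rw [e])
      have hadj : (G □ H).Adj (x, a) (x, b) ↔ H.Adj a b := by
        rw [SimpleGraph.boxProd_adj]
        simp [hab]
      rw [hadj, alternates_iff' hpq]
      rcases pair_sublist_or (hmemτ a) (hmemτ b) hab with hor | hor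
      · exact row_iff H w₁ w₂ σl τl hndσ hndτ hmemσ h₂ hab hor
          (sorted_pair_idx hmemU hsortτ hor hab) (hmemU a) (by rw [hc₂ a, hc₂ b])
      · have h1 := row_iff (x := x) H w₁ w₂ σl τl hndσ hndτ hmemσ h₂ (Ne.symm hab) hor
          (sorted_pair_idx hmemU hsortτ hor (Ne.symm hab)) (hmemU b) (by rw [hc₂ a, hc₂ b])
        rw [SimpleGraph.adj_comm, h1]
        exact chain'_patF_comm hpq _
    · by_cases hab : a = b
      · subst hab
        have hadj : (G □ H).Adj (x, a) (y, a) ↔ G.Adj x y := by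
          rw [SimpleGraph.boxProd_adj]
          simp [hxy]
        rw [hadj, alternates_iff' hpq]
        rcases pair_sublist_or (hmemσ x) (hmemσ y) hxy with hor | hor
        · exact col_iff G w₁ w₂ σl τl hndσ hndτ hmemτ h₁ hxy hor
            (sorted_pair_idx hmemV hsortσ hor hxy) (hmemV x) (by rw [hc₁ x, hc₁ y])
        · have h1 := col_iff (a := a) G w₁ w₂ σl τl hndσ hndτ hmemτ h₁ (Ne.symm hxy) hor
            (sorted_pair_idx hmemV hsortσ hor (Ne.symm hxy)) (hmemV y) (by rw [hc₁ x, hc₁ y])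
          rw [SimpleGraph.adj_comm, h1]
          exact chain'_patF_comm hpq _
      · have hadj : ¬ (G □ H).Adj (x, a) (y, b) := by
          rw [SimpleGraph.boxProd_adj]
          simp [hxy, hab]
        rw [alternates_iff' hpq]
        constructor
        · intro hcon
          exact (hadj hcon).elim
        · intro hch
          exfalso
          rcases pair_sublist_or (hmemσ x) (hmemσ y) hxy with hor | hor
          · exact diag_not G w₁ w₂ σl τl hndσ hndτ hmemτ h₁ hxy hab hor
              (sorted_pair_idx hmemV hsortσ hor hxy) (hmemV x) (by rw [hc₁ x, hc₁ y]) hch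
          · exact diag_not G w₁ w₂ σl τl hndσ hndτ hmemτ h₁ (Ne.symm hxy) (Ne.symm hab) hor
              (sorted_pair_idx hmemV hsortσ hor (Ne.symm hxy)) (hmemV y)
              (by rw [hc₁ x, hc₁ y]) ((chain'_patF_comm hpq _).mpr hch)
  · -- counts
    rintro ⟨x, a⟩
    rw [List.count_append, List.count_append, count_grid,
      count_Mword (hmemσ x) hndσ (hmemτ a) hndτ, count_gridT, hc₁ x, hc₂ a,
      List.count_eq_one_of_mem hndτ (hmemτ a), List.count_eq_one_of_mem hndσ (hmemσ x), hlenτ]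
    omega

lemma count_map_swap (w : List (U × V)) (p : V × U) :
    (w.map Prod.swap).count p = w.count p.swap := by
  induction w with
  | nil => rfl
  | cons q w ih =>
    rw [List.map_cons]
    by_cases h : p = q.swap
    · subst h
      rw [Prod.swap_swap, List.count_cons_self, List.count_cons_self]
      have h3 := ih
      rw [Prod.swap_swap] at h3
      rw [h3]
    · rw [List.count_cons_of_ne (Ne.symm h),
        List.count_cons_of_ne (fun e => h (by rw [e, Prod.swap_swap])), ih]

lemma patF_map_swap (p q : V × U) (w : List (U × V)) :
    patF p q (w.map Prod.swap) = patF p.swap q.swap w := by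
  unfold patF
  rw [List.filterMap_map]
  apply List.filterMap_congr
  intro z _
  simp only [Function.comp_apply]
  by_cases h1 : z = p.swap
  · rw [if_pos (by rw [h1, Prod.swap_swap]), if_pos h1]
  · rw [if_neg (fun e => h1 (by rw [← e, Prod.swap_swap])), if_neg h1]
    by_cases h2 : z = q.swap
    · rw [if_pos (by rw [h2, Prod.swap_swap]), if_pos h2]
    · rw [if_neg (fun e => h2 (by rw [← e, Prod.swap_swap])), if_neg h2]

end Final
end WR16


theorem stmt16 {U : Type*} [Fintype V] [Fintype U] [DecidableEq V] [DecidableEq U]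
    (G : SimpleGraph V) (H : SimpleGraph U) (k₁ k₂ : ℕ)
    (hk₁ : (∃ w : List V, Represents G w ∧ ∀ v : V, w.count v = k₁) ∧
      ∀ k : ℕ, (∃ w : List V, Represents G w ∧ ∀ v : V, w.count v = k) → k₁ ≤ k)
    (hk₂ : (∃ w : List U, Represents H w ∧ ∀ v : U, w.count v = k₂) ∧
      ∀ k : ℕ, (∃ w : List U, Represents H w ∧ ∀ v : U, w.count v = k) → k₂ ≤ k) :
    ∃ w : List (V × U), Represents (G □ H) w ∧
      ∀ p : V × U, w.count p = k₁ + k₂ + min (Fintype.card V) (Fintype.card U) := by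
  classical
  obtain ⟨⟨w₁, h₁, hc₁⟩, -⟩ := hk₁
  obtain ⟨⟨w₂, h₂, hc₂⟩, -⟩ := hk₂
  rcases le_total (Fintype.card U) (Fintype.card V) with h | h
  · obtain ⟨w, hrep, hcnt⟩ := WR16.main_construction G H k₁ k₂ w₁ w₂ h₁ hc₁ h₂ hc₂
    exact ⟨w, hrep, fun p => by rw [hcnt p, min_eq_right h]⟩
  · obtain ⟨w, hrep, hcnt⟩ := WR16.main_construction H G k₂ k₁ w₂ w₁ h₂ hc₂ h₁ hc₁
    refine ⟨w.map Prod.swap, ⟨?_, ?_⟩, ?_⟩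
    · intro p
      exact List.mem_map.mpr ⟨p.swap, hrep.1 p.swap, Prod.swap_swap p⟩
    · intro p q hpq
      have hsw : p.swap ≠ q.swap := fun e => hpq (by rw [← Prod.swap_swap p, e, Prod.swap_swap])
      have hadj : (G □ H).Adj p q ↔ (H □ G).Adj p.swap q.swap := by
        rw [SimpleGraph.boxProd_adj, SimpleGraph.boxProd_adj]
        obtain ⟨p1, p2⟩ := p
        obtain ⟨q1, q2⟩ := q
        simp only [Prod.swap_prod_mk]
        tauto
      rw [hadj, hrep.2 p.swap q.swap hsw, WR16.alternates_iff' hsw, WR16.alternates_iff' hpq,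
        WR16.patF_map_swap]
    · intro p
      rw [WR16.count_map_swap, hcnt, min_eq_left h]
      omega
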